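/- Assume J positive and strictly decreasing and 0 < h < ∑_{n=1}^{N-1} J(n). If a configuration σ satisfies H(θ_k σ) ≥ H(σ) for every k ∈ {1,...,N} (i.e., σ is a local minimum of H under single spin flips), then σ is constant: σ = -1 everywhere or σ = +1 everywhere. -/

import Mathlib

open Finset

/-- Long-range Ising Hamiltonian with free boundary conditions on {0,...,N-1}:
`H(σ) = -∑_{i<j} J(|i-j|) σᵢ σⱼ - h ∑ᵢ σᵢ`. -/
noncomputable def H (N : ℕ) (J : ℕ → ℝ) (h : ℝ) (σ : Fin N → ℝ) : ℝ :=
  -(∑ i : Fin N, ∑ j : Fin N,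
      if (i : ℕ) < (j : ℕ) then J (Nat.dist (i : ℕ) (j : ℕ)) * σ i * σ j else 0)
    - h * ∑ i : Fin N, σ i

/-- A spin configuration takes values in {-1, +1}. -/
def IsConfig {N : ℕ} (σ : Fin N → ℝ) : Prop := ∀ i, σ i = 1 ∨ σ i = -1

/-- The configuration `L^(k)`: +1 on the first k sites, -1 elsewhere. -/
def Lconf (N k : ℕ) : Fin N → ℝ := fun i => if (i : ℕ) < k then 1 else -1

/-- The configuration `R^(k)`: +1 on the last k sites, -1 elsewhere. -/
def Rconf (N k : ℕ) : Fin N → ℝ := fun i => if N - k ≤ (i : ℕ) then 1 else -1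

/-- Proposition 4.3: if flipping any single spin does not decrease the energy, then
`σ` is the all-minus or the all-plus configuration. -/
lemma flip_diff (N : ℕ) (J : ℕ → ℝ) (h : ℝ) (σ : Fin N → ℝ) (k : Fin N) :
    H N J h (Function.update σ k (-(σ k))) - H N J h σ
      = 2 * σ k * ((∑ j : Fin N, if j ≠ k then J (Nat.dist (k : ℕ) (j : ℕ)) * σ j else 0) + h) := by
  classical
  set σ' := Function.update σ k (-(σ k)) with hσ'def
  have hk : σ' k = -(σ k) := Function.update_self _ _ _
  have hne : ∀ j : Fin N, j ≠ k → σ' j = σ j := fun j hj => Function.update_of_ne hj _ _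
  -- linear part
  have hlin : ∑ i : Fin N, σ' i = ∑ i : Fin N, σ i - 2 * σ k := by
    rw [← Finset.add_sum_erase univ σ' (mem_univ k), ← Finset.add_sum_erase univ σ (mem_univ k),
      hk, Finset.sum_congr rfl (fun j hj => hne j (Finset.ne_of_mem_erase hj))]
    ring
  -- difference terms
  set D : Fin N → Fin N → ℝ := fun i j =>
    (if (i : ℕ) < (j : ℕ) then J (Nat.dist (i : ℕ) (j : ℕ)) * σ' i * σ' j else 0) -
    (if (i : ℕ) < (j : ℕ) then J (Nat.dist (i : ℕ) (j : ℕ)) * σ i * σ j else 0) with hD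
  have hDzero : ∀ i j : Fin N, i ≠ k → j ≠ k → D i j = 0 := by
    intro i j hi hj
    simp only [hD, hne i hi, hne j hj, sub_self]
  have hquad : (∑ i : Fin N, ∑ j : Fin N,
        if (i : ℕ) < (j : ℕ) then J (Nat.dist (i : ℕ) (j : ℕ)) * σ' i * σ' j else 0)
      - (∑ i : Fin N, ∑ j : Fin N,
        if (i : ℕ) < (j : ℕ) then J (Nat.dist (i : ℕ) (j : ℕ)) * σ i * σ j else 0)
      = -2 * σ k * (∑ j : Fin N, if j ≠ k then J (Nat.dist (k : ℕ) (j : ℕ)) * σ j else 0) := by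
    rw [← Finset.sum_sub_distrib]
    have hrow : ∀ i : Fin N, (∑ j : Fin N,
          if (i : ℕ) < (j : ℕ) then J (Nat.dist (i : ℕ) (j : ℕ)) * σ' i * σ' j else 0)
        - (∑ j : Fin N,
          if (i : ℕ) < (j : ℕ) then J (Nat.dist (i : ℕ) (j : ℕ)) * σ i * σ j else 0)
        = ∑ j : Fin N, D i j := by
      intro i; rw [← Finset.sum_sub_distrib]
    calc ∑ i : Fin N, _ = ∑ i : Fin N, ∑ j : Fin N, D i j := Finset.sum_congr rfl (fun i _ => hrow i)
      _ = (∑ j : Fin N, D k j) + ∑ i ∈ univ.erase k, ∑ j : Fin N, D i j :=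
          (Finset.add_sum_erase univ _ (mem_univ k)).symm
      _ = (∑ j ∈ univ.erase k, D k j) + ∑ i ∈ univ.erase k, D i k := by
          congr 1
          · rw [← Finset.add_sum_erase univ (fun j => D k j) (mem_univ k)]
            have : D k k = 0 := by simp [hD]
            rw [this, zero_add]
          · refine Finset.sum_congr rfl (fun i hi => ?_)
            rw [← Finset.add_sum_erase univ (fun j => D i j) (mem_univ k)]
            rw [Finset.sum_eq_zero (fun j hj => hDzero i j (Finset.ne_of_mem_erase hi)
              (Finset.ne_of_mem_erase hj)), add_zero]
      _ = ∑ j ∈ univ.erase k, (D k j + D j k) := by rw [← Finset.sum_add_distrib]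
      _ = ∑ j ∈ univ.erase k, (-2 * σ k * (J (Nat.dist (k : ℕ) (j : ℕ)) * σ j)) := by
          refine Finset.sum_congr rfl (fun j hj => ?_)
          have hjk : j ≠ k := Finset.ne_of_mem_erase hj
          have hv : (j : ℕ) ≠ (k : ℕ) := fun hval => hjk (Fin.ext hval)
          have hσj : σ' j = σ j := hne j hjk
          rcases hv.lt_or_gt with hlt | hlt
          · have h1 : ¬ ((k : ℕ) < (j : ℕ)) := not_lt.mpr hlt.le
            have hdist : Nat.dist (j : ℕ) (k : ℕ) = Nat.dist (k : ℕ) (j : ℕ) := Nat.dist_comm _ _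
            simp only [hD, if_neg h1, if_pos hlt, hdist, hk, hσj]
            ring
          · have h1 : ¬ ((j : ℕ) < (k : ℕ)) := not_lt.mpr hlt.le
            simp only [hD, if_neg h1, if_pos hlt, hk, hσj]
            ring
      _ = -2 * σ k * ∑ j ∈ univ.erase k, J (Nat.dist (k : ℕ) (j : ℕ)) * σ j := by
          rw [Finset.mul_sum]
      _ = -2 * σ k * (∑ j : Fin N, if j ≠ k then J (Nat.dist (k : ℕ) (j : ℕ)) * σ j else 0) := by
          congr 1
          rw [← Finset.sum_filter, Finset.filter_ne']
  simp only [H]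
  rw [hlin]
  have := hquad
  linarith [hquad]

lemma tele1 (J : ℕ → ℝ) (a : ℕ) :
    ∑ j ∈ Finset.range a, (J (a - j) - J (a + 1 - j)) = J 1 - J (a + 1) := by
  rw [← Finset.sum_range_reflect]
  have : ∀ j ∈ Finset.range a, (J (a - (a - 1 - j)) - J (a + 1 - (a - 1 - j)))
      = J (j + 1) - J (j + 2) := by
    intro j hj
    have hj' := Finset.mem_range.mp hj
    have h1 : a - (a - 1 - j) = j + 1 := by omega
    have h2 : a + 1 - (a - 1 - j) = j + 2 := by omega
    rw [h1, h2]
  rw [Finset.sum_congr rfl this]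
  have := Finset.sum_range_sub' (fun i => J (i + 1)) a
  simpa using this

lemma tele2 (J : ℕ → ℝ) (a N : ℕ) (hN : a + 2 ≤ N) :
    ∑ j ∈ Finset.Ico (a + 2) N, (J (j - a - 1) - J (j - a)) = J 1 - J (N - a - 1) := by
  rw [Finset.sum_Ico_eq_sum_range]
  have : ∀ i ∈ Finset.range (N - (a + 2)), (J (a + 2 + i - a - 1) - J (a + 2 + i - a))
      = J (i + 1) - J (i + 2) := by
    intro i hi
    have h1 : a + 2 + i - a - 1 = i + 1 := by omega
    have h2 : a + 2 + i - a = i + 2 := by omega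
    rw [h1, h2]
  rw [Finset.sum_congr rfl this]
  have := Finset.sum_range_sub' (fun i => J (i + 1)) (N - (a + 2))
  have hh : N - (a + 2) + 1 = N - a - 1 := by omega
  simpa [hh] using this

lemma exists_adjacent {N : ℕ} (hN : 2 ≤ N) (σ : Fin N → ℝ)
    (hnc : ∃ i j : Fin N, σ i ≠ σ j) :
    ∃ a : ℕ, ∃ ha : a + 1 < N, σ ⟨a, Nat.lt_of_succ_lt ha⟩ ≠ σ ⟨a + 1, ha⟩ := by
  classical
  have h0 : 0 < N := by omega
  obtain ⟨i, j, hij⟩ := hnc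
  have hP : ∃ m : ℕ, ∃ hm : m < N, σ ⟨m, hm⟩ ≠ σ ⟨0, h0⟩ := by
    by_cases hi : σ i = σ ⟨0, h0⟩
    · exact ⟨j.1, j.2, by rw [Fin.eta]; exact fun e => hij (hi.trans e.symm)⟩
    · exact ⟨i.1, i.2, by rw [Fin.eta]; exact hi⟩
  obtain ⟨hm, hmne⟩ := Nat.find_spec hP
  set m := Nat.find hP with hmdef
  have hm0 : m ≠ 0 := by
    intro h0'
    have e : (⟨m, hm⟩ : Fin N) = ⟨0, h0⟩ := Fin.ext h0'
    rw [e] at hmne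
    exact hmne rfl
  have hprev : ¬ ∃ hm' : m - 1 < N, σ ⟨m - 1, hm'⟩ ≠ σ ⟨0, h0⟩ := Nat.find_min hP (by omega)
  push_neg at hprev
  have hlt : m - 1 < N := by omega
  have heq : σ ⟨m - 1, hlt⟩ = σ ⟨0, h0⟩ := hprev hlt
  have ha' : m - 1 + 1 < N := by omega
  have hm' : m - 1 + 1 = m := by omega
  refine ⟨m - 1, ha', fun hcon => hmne ?_⟩
  have e1 : (⟨m - 1 + 1, ha'⟩ : Fin N) = ⟨m, hm⟩ := Fin.ext hm'
  calc σ ⟨m, hm⟩ = σ ⟨m - 1 + 1, ha'⟩ := by rw [e1]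
    _ = σ ⟨m - 1, Nat.lt_of_succ_lt ha'⟩ := hcon.symm
    _ = σ ⟨0, h0⟩ := heq

theorem local_minima_are_constant (N : ℕ) (hN : 2 ≤ N) (J : ℕ → ℝ)
    (hpos : ∀ n, 1 ≤ n → 0 < J n) (hdec : ∀ n, 1 ≤ n → J (n + 1) < J n)
    (h : ℝ) (hh0 : 0 < h) (hh1 : h < ∑ n ∈ Finset.Icc 1 (N - 1), J n)
    (σ : Fin N → ℝ) (hσ : IsConfig σ)
    (hmin : ∀ k : Fin N, H N J h σ ≤ H N J h (Function.update σ k (-(σ k)))) :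
    (∀ i, σ i = -1) ∨ (∀ i, σ i = 1) := by
  classical
  by_contra hcon
  push_neg at hcon
  obtain ⟨⟨i0, hi0⟩, ⟨i1, hi1⟩⟩ := hcon
  have hne01 : σ i0 ≠ σ i1 := by
    rcases hσ i0 with e0 | e0
    · rcases hσ i1 with e1 | e1
      · exact absurd e1 hi1
      · rw [e0, e1]; norm_num
    · exact absurd e0 hi0
  obtain ⟨a, ha, hadj⟩ := exists_adjacent hN σ ⟨i0, i1, hne01⟩
  set k : Fin N := ⟨a, Nat.lt_of_succ_lt ha⟩ with hkdef
  set k' : Fin N := ⟨a + 1, ha⟩ with hk'def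
  have hflip : σ k' = -(σ k) := by
    rcases hσ k with e0 | e0 <;> rcases hσ k' with e1 | e1
    · exact absurd (e0.trans e1.symm) hadj
    · simp [e0, e1]
    · simp [e0, e1]
    · exact absurd (e0.trans e1.symm) hadj
  set F : Fin N → ℝ := fun x =>
    ∑ j : Fin N, if j ≠ x then J (Nat.dist (x : ℕ) (j : ℕ)) * σ j else 0 with hFdef
  have key : ∀ x : Fin N, 0 ≤ σ x * (F x + h) := by
    intro x
    have h1 := hmin x
    have h2 := flip_diff N J h σ x
    have : 0 ≤ 2 * σ x * (F x + h) := by rw [← h2]; linarith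
    linarith
  have hsum : 0 ≤ σ k * (F k - F k') := by
    have h1 := key k
    have h2 := key k'
    rw [hflip] at h2
    nlinarith [h1, h2]
  -- ℕ-indexed spin function
  set τ : ℕ → ℝ := fun j => if hj : j < N then σ ⟨j, hj⟩ else 0 with hτdef
  have hτval : ∀ (j : Fin N), τ (j : ℕ) = σ j := by
    intro j
    simp only [hτdef, j.isLt, dif_pos, Fin.eta]
  have hFnat : ∀ b : ℕ, ∀ x : Fin N, (x : ℕ) = b →
      F x = ∑ j ∈ Finset.range N, (if j ≠ b then J (Nat.dist b j) * τ j else 0) := by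
    intro b x hxb
    rw [hFdef, ← Fin.sum_univ_eq_sum_range (fun j => if j ≠ b then J (Nat.dist b j) * τ j else 0) N]
    refine Finset.sum_congr rfl fun j _ => ?_
    have hc : (j ≠ x) ↔ ((j : ℕ) ≠ b) := by
      rw [← hxb, Ne, Ne, Fin.ext_iff]
    rw [hτval j, hxb]
    by_cases hcc : (j : ℕ) ≠ b
    · rw [if_pos hcc, if_pos (hc.mpr hcc)]
    · rw [if_neg hcc, if_neg (fun hh' => hcc (hc.mp hh'))]
  have hFk := hFnat a k rfl
  have hFk' := hFnat (a + 1) k' rfl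
  set u : ℕ → ℝ := fun j => σ k * ((if j ≠ a then J (Nat.dist a j) * τ j else 0)
      - (if j ≠ a + 1 then J (Nat.dist (a + 1) j) * τ j else 0)) with hudef
  have hdiffsum : σ k * (F k - F k') = ∑ j ∈ Finset.range N, u j := by
    rw [hFk, hFk', ← Finset.sum_sub_distrib, Finset.mul_sum]
  set v : ℕ → ℝ := fun j => if j = a ∨ j = a + 1 then -J 1
      else |J (Nat.dist a j) - J (Nat.dist (a + 1) j)| with hvdef
  have hsq : σ k * σ k = 1 := by rcases hσ k with e | e <;> rw [e] <;> norm_num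
  have hbound : ∀ j ∈ Finset.range N, u j ≤ v j := by
    intro j hj
    have hjN := Finset.mem_range.mp hj
    have hτj : τ j = σ ⟨j, hjN⟩ := dif_pos hjN
    by_cases h1 : j = a
    · subst h1
      have d1 : Nat.dist (j + 1) j = 1 := by unfold Nat.dist; omega
      have hτk : τ j = σ k := hτj
      rw [hudef, hvdef]
      simp only [if_pos (Or.inl rfl), if_neg (show ¬(j ≠ j) by omega),
        if_pos (show j ≠ j + 1 by omega), d1, hτk]
      have e : σ k * (0 - J 1 * σ k) = -(J 1) * (σ k * σ k) := by ring
      rw [e, hsq, mul_one]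
      simp
    · by_cases h2 : j = a + 1
      · subst h2
        have d1 : Nat.dist a (a + 1) = 1 := by unfold Nat.dist; omega
        have hτk' : τ (a + 1) = -(σ k) := by rw [hτj, ← hflip]
        rw [hudef, hvdef]
        simp only [if_pos (Or.inr rfl), if_pos (show a + 1 ≠ a by omega),
          if_neg (show ¬(a + 1 ≠ a + 1) by omega), d1, hτk']
        have e : σ k * (J 1 * -(σ k) - 0) = -(J 1) * (σ k * σ k) := by ring
        rw [e, hsq, mul_one]
        simp
      · rw [hudef, hvdef]
        simp only [if_neg (show ¬(j = a ∨ j = a + 1) by omega),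
          if_pos (show j ≠ a by omega), if_pos (show j ≠ a + 1 by omega)]
        have e : σ k * (J (Nat.dist a j) * τ j - J (Nat.dist (a + 1) j) * τ j)
            = (J (Nat.dist a j) - J (Nat.dist (a + 1) j)) * (σ k * τ j) := by ring
        rw [e]
        rcases hσ k with ek | ek <;> rcases hσ ⟨j, hjN⟩ with ej | ej <;>
          rw [hτj, ek, ej] <;>
          linarith [le_abs_self (J (Nat.dist a j) - J (Nat.dist (a + 1) j)),
            neg_abs_le (J (Nat.dist a j) - J (Nat.dist (a + 1) j))]
  have husum : 0 ≤ ∑ j ∈ Finset.range N, u j := by rw [← hdiffsum]; exact hsum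
  have hvle := Finset.sum_le_sum hbound
  have ha2 : a + 2 ≤ N := by omega
  have hsplit : ∑ j ∈ Finset.range (a + 2), v j + ∑ j ∈ Finset.Ico (a + 2) N, v j
      = ∑ j ∈ Finset.range N, v j := by
    rw [Finset.range_eq_Ico, Finset.range_eq_Ico]
    exact Finset.sum_Ico_consecutive v (Nat.zero_le _) ha2
  have hva : v a = -J 1 := if_pos (Or.inl rfl)
  have hva1 : v (a + 1) = -J 1 := if_pos (Or.inr rfl)
  have hr2 : ∑ j ∈ Finset.range (a + 2), v j
      = ∑ j ∈ Finset.range a, v j + v a + v (a + 1) := by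
    rw [Finset.sum_range_succ, Finset.sum_range_succ]
  have hvval_left : ∀ j ∈ Finset.range a, v j = J (a - j) - J (a + 1 - j) := by
    intro j hj
    have hja := Finset.mem_range.mp hj
    have d1 : Nat.dist a j = a - j := by unfold Nat.dist; omega
    have d2 : Nat.dist (a + 1) j = a + 1 - j := by unfold Nat.dist; omega
    have h2 : a + 1 - j = (a - j) + 1 := by omega
    have h1 : 1 ≤ a - j := by omega
    have hlt := hdec (a - j) h1
    simp only [hvdef, if_neg (show ¬(j = a ∨ j = a + 1) by omega), d1, d2]
    rw [abs_of_nonneg (by rw [h2]; linarith)]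
  have hleft : ∑ j ∈ Finset.range a, v j = J 1 - J (a + 1) := by
    rw [Finset.sum_congr rfl hvval_left, tele1]
  have hvval_right : ∀ j ∈ Finset.Ico (a + 2) N, v j = J (j - a - 1) - J (j - a) := by
    intro j hj
    obtain ⟨hj1, hj2⟩ := Finset.mem_Ico.mp hj
    have d1 : Nat.dist a j = j - a := by unfold Nat.dist; omega
    have d2 : Nat.dist (a + 1) j = j - a - 1 := by unfold Nat.dist; omega
    have h2 : j - a = (j - a - 1) + 1 := by omega
    have h1 : 1 ≤ j - a - 1 := by omega
    have hlt := hdec (j - a - 1) h1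
    simp only [hvdef, if_neg (show ¬(j = a ∨ j = a + 1) by omega), d1, d2]
    have h2' := congrArg J h2
    rw [abs_of_nonpos (by rw [h2']; linarith), neg_sub]
  have hright : ∑ j ∈ Finset.Ico (a + 2) N, v j = J 1 - J (N - a - 1) := by
    rw [Finset.sum_congr rfl hvval_right, tele2 J a N ha2]
  have hJa : 0 < J (a + 1) := hpos _ (by omega)
  have hJb : 0 < J (N - a - 1) := hpos _ (by omega)
  linarith
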